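/- Every involution w in S_n can be written as w = τ⁻¹ σ_X τ, where X ⊆ {1,…,n−1} contains no two consecutive integers, σ_X is the product of the transpositions (i,i+1) for i ∈ X, τ ∈ S_n, and the lengths add: inv(w) = 2·inv(τ) + |X|. -/

import Mathlib

/-- Number of inversions of a permutation of `Fin n`: pairs `i < j` with `w i > w j`.
This equals the Coxeter length. -/
def invNum {n : ℕ} (w : Equiv.Perm (Fin n)) : ℕ :=
  (Finset.univ.filter fun p : Fin n × Fin n => p.1 < p.2 ∧ w p.2 < w p.1).card

/-- `X` contains no two consecutive indices. -/
def NoConsec {n : ℕ} (X : Finset (Fin n)) : Prop :=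
  ∀ i ∈ X, ∀ j ∈ X, (j : ℕ) ≠ (i : ℕ) + 1

/-- `σ` is the product `σ_X` of the adjacent transpositions `(i, i+1)` for `i ∈ X`. -/
def IsSigmaX {n : ℕ} (X : Finset (Fin n)) (σ : Equiv.Perm (Fin n)) : Prop :=
  (∀ i ∈ X, ((σ i : ℕ) = (i : ℕ) + 1 ∧ σ (σ i) = i)) ∧
  (∀ j : Fin n, (∀ i ∈ X, j ≠ i ∧ (j : ℕ) ≠ (i : ℕ) + 1) → σ j = j)

namespace SigmaXAux

open Equiv Finset

variable {n : ℕ}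

def invSet (w : Equiv.Perm (Fin n)) : Finset (Fin n × Fin n) :=
  Finset.univ.filter fun p : Fin n × Fin n => p.1 < p.2 ∧ w p.2 < w p.1

lemma invNum_eq (w : Equiv.Perm (Fin n)) : invNum w = (invSet w).card := rfl

lemma mem_invSet {w : Equiv.Perm (Fin n)} {p : Fin n × Fin n} :
    p ∈ invSet w ↔ p.1 < p.2 ∧ w p.2 < w p.1 := by
  simp [invSet]

lemma swap_lt_swap {a b p q : Fin n} (hab : (a : ℕ) + 1 = b) (hpq : p < q)
    (h : ¬(p = a ∧ q = b)) : Equiv.swap a b p < Equiv.swap a b q := by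
  by_cases hpa : p = a
  · subst hpa
    have hqb : q ≠ b := fun hq => h ⟨rfl, hq⟩
    rw [Equiv.swap_apply_left, Equiv.swap_apply_of_ne_of_ne (ne_of_gt hpq) hqb]
    have : (q : ℕ) ≠ (b : ℕ) := fun hh => hqb (Fin.ext hh)
    rw [Fin.lt_def] at hpq ⊢
    omega
  · by_cases hpb : p = b
    · subst hpb
      have hqa : q ≠ a := by
        intro hh; subst hh; rw [Fin.lt_def] at hpq; omega
      rw [Equiv.swap_apply_right, Equiv.swap_apply_of_ne_of_ne hqa (ne_of_gt hpq)]
      rw [Fin.lt_def] at hpq ⊢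
      omega
    · rw [Equiv.swap_apply_of_ne_of_ne hpa hpb]
      by_cases hqa : q = a
      · subst hqa
        rw [Equiv.swap_apply_left]
        rw [Fin.lt_def] at hpq ⊢
        omega
      · by_cases hqb : q = b
        · subst hqb
          rw [Equiv.swap_apply_right]
          have : (p : ℕ) ≠ (a : ℕ) := fun hh => hpa (Fin.ext hh)
          rw [Fin.lt_def] at hpq ⊢
          omega
        · rw [Equiv.swap_apply_of_ne_of_ne hqa hqb]
          exact hpq

lemma invNum_mul_swap_ascent (w : Equiv.Perm (Fin n)) {a b : Fin n}
    (hab : (a : ℕ) + 1 = b) (h : w a < w b) :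
    invNum (w * Equiv.swap a b) = invNum w + 1 := by
  classical
  set s := Equiv.swap a b with hs
  have hset : invSet (w * s) =
      insert (a, b) ((invSet w).image fun p => (s p.1, s p.2)) := by
    ext ⟨p1, p2⟩
    simp only [mem_invSet, Finset.mem_insert, Finset.mem_image, Prod.mk.injEq,
      Equiv.Perm.mul_apply]
    constructor
    · rintro ⟨h12, hinv⟩
      by_cases hp : p1 = a ∧ p2 = b
      · exact Or.inl ⟨hp.1, hp.2⟩
      · refine Or.inr ⟨(s p1, s p2), ⟨swap_lt_swap hab h12 hp, ?_⟩,
          by simp [hs], by simp [hs]⟩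
        simpa [hs] using hinv
    · rintro (⟨rfl, rfl⟩ | ⟨q, ⟨hq12, hqinv⟩, hq1, hq2⟩)
      · constructor
        · rw [Fin.lt_def]; omega
        · simpa [hs] using h
      · subst hq1; subst hq2
        have hqab : ¬(q.1 = a ∧ q.2 = b) := by
          rintro ⟨ha', hb'⟩
          rw [ha', hb'] at hqinv
          exact absurd h (not_lt.mpr hqinv.le)
        exact ⟨swap_lt_swap hab hq12 hqab, by simpa [hs] using hqinv⟩
  have hnotmem : (a, b) ∉ (invSet w).image fun p => (s p.1, s p.2) := by
    simp only [Finset.mem_image, Prod.mk.injEq, not_exists, not_and]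
    rintro q hq h1 h2
    obtain ⟨hq12, _⟩ := mem_invSet.mp hq
    have e1 : q.1 = b := by
      have := congrArg s h1
      simpa [hs, Equiv.swap_apply_self, Equiv.swap_apply_left] using this
    have e2 : q.2 = a := by
      have := congrArg s h2
      simpa [hs, Equiv.swap_apply_self, Equiv.swap_apply_right] using this
    rw [e1, e2, Fin.lt_def] at hq12; omega
  have hinj : Function.Injective fun p : Fin n × Fin n => (s p.1, s p.2) := by
    rintro ⟨x1, x2⟩ ⟨y1, y2⟩ hxy
    simp only [Prod.mk.injEq] at hxy
    exact Prod.ext (s.injective hxy.1) (s.injective hxy.2)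
  rw [invNum_eq, invNum_eq, hset, Finset.card_insert_of_notMem hnotmem,
    Finset.card_image_of_injective _ hinj]

lemma invNum_mul_swap_descent (w : Equiv.Perm (Fin n)) {a b : Fin n}
    (hab : (a : ℕ) + 1 = b) (h : w b < w a) :
    invNum w = invNum (w * Equiv.swap a b) + 1 := by
  have h2 : (w * Equiv.swap a b) a < (w * Equiv.swap a b) b := by
    simpa [Equiv.Perm.mul_apply] using h
  have := invNum_mul_swap_ascent (w * Equiv.swap a b) hab h2
  rwa [mul_assoc, Equiv.swap_mul_self, mul_one] at this

end SigmaXAux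

namespace SigmaXAux

variable {n : ℕ}

lemma invNum_inv (w : Equiv.Perm (Fin n)) : invNum w⁻¹ = invNum w := by
  rw [invNum_eq, invNum_eq]
  refine Finset.card_nbij' (fun p => (w⁻¹ p.2, w⁻¹ p.1)) (fun p => (w p.2, w p.1))
    ?_ ?_ ?_ ?_
  · rintro ⟨p1, p2⟩ hp
    simp only [Finset.mem_coe, mem_invSet] at hp ⊢
    obtain ⟨h12, hinv⟩ := hp
    exact ⟨hinv, by simpa using h12⟩
  · rintro ⟨p1, p2⟩ hp
    simp only [Finset.mem_coe, mem_invSet] at hp ⊢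
    obtain ⟨h12, hinv⟩ := hp
    exact ⟨hinv, by simpa using h12⟩
  · rintro ⟨p1, p2⟩ _; simp
  · rintro ⟨p1, p2⟩ _; simp

lemma invNum_mul_le (u v : Equiv.Perm (Fin n)) :
    invNum (u * v) ≤ invNum u + invNum v := by
  classical
  rw [invNum_eq, invNum_eq, invNum_eq]
  have hsplit := Finset.card_filter_add_card_filter_not
    (s := invSet (u * v)) (p := fun p => v p.2 < v p.1)
  have le1 : ((invSet (u * v)).filter fun p => v p.2 < v p.1).card ≤ (invSet v).card := by
    apply Finset.card_le_card
    rintro ⟨p1, p2⟩ hp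
    rw [Finset.mem_filter, mem_invSet] at hp
    exact mem_invSet.mpr ⟨hp.1.1, hp.2⟩
  have le2 : ((invSet (u * v)).filter fun p => ¬ v p.2 < v p.1).card ≤ (invSet u).card := by
    refine Finset.card_le_card_of_injOn (fun p : Fin n × Fin n => (v p.1, v p.2)) ?_ ?_
    · rintro ⟨p1, p2⟩ hp
      rw [Finset.mem_coe, Finset.mem_filter, mem_invSet] at hp
      obtain ⟨⟨h12, hinv⟩, hnlt⟩ := hp
      simp only [Finset.mem_coe, mem_invSet]
      refine ⟨?_, by simpa [Equiv.Perm.mul_apply] using hinv⟩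
      have hne : v p1 ≠ v p2 := fun hh => (ne_of_lt h12) (v.injective hh)
      exact lt_of_le_of_ne (not_lt.mp hnlt) hne
    · rintro ⟨p1, p2⟩ _ ⟨q1, q2⟩ _ hpq
      simp only [Prod.mk.injEq] at hpq
      exact Prod.ext (v.injective hpq.1) (v.injective hpq.2)
  omega

lemma invNum_one : invNum (1 : Equiv.Perm (Fin n)) = 0 := by
  rw [invNum_eq, Finset.card_eq_zero, Finset.eq_empty_iff_forall_notMem]
  rintro ⟨p1, p2⟩ hp
  obtain ⟨h12, hinv⟩ := mem_invSet.mp hp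
  simp only [Equiv.Perm.one_apply] at hinv
  exact absurd h12 (not_lt.mpr hinv.le)

lemma invNum_sigmaX {X : Finset (Fin n)} {σ : Equiv.Perm (Fin n)}
    (h : IsSigmaX X σ) : invNum σ = X.card := by
  classical
  obtain ⟨h1, h2⟩ := h
  have hmem : ∀ j : Fin n, σ j = j ∨ j ∈ X ∨ ∃ i ∈ X, j = σ i := by
    intro j
    by_cases hj : ∀ i ∈ X, j ≠ i ∧ (j : ℕ) ≠ (i : ℕ) + 1
    · exact Or.inl (h2 j hj)
    · push_neg at hj
      obtain ⟨i, hi, hcase⟩ := hj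
      by_cases hji : j = i
      · exact Or.inr (Or.inl (hji ▸ hi))
      · refine Or.inr (Or.inr ⟨i, hi, ?_⟩)
        have hv : (j : ℕ) = (i : ℕ) + 1 := hcase hji
        have : (σ i : ℕ) = (j : ℕ) := by rw [(h1 i hi).1, hv]
        exact (Fin.ext this).symm
  have fact_pm : ∀ j : Fin n, (σ j : ℕ) = j ∨ (σ j : ℕ) = (j : ℕ) + 1 ∨
      (σ j : ℕ) + 1 = j := by
    intro j
    rcases hmem j with hj | hj | ⟨i, hi, rfl⟩
    · exact Or.inl (by rw [hj])
    · exact Or.inr (Or.inl (h1 j hj).1)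
    · refine Or.inr (Or.inr ?_)
      rw [(h1 i hi).2, (h1 i hi).1]
  have factX : ∀ j : Fin n, (σ j : ℕ) = (j : ℕ) + 1 → j ∈ X := by
    intro j hj
    rcases hmem j with h' | h' | ⟨i, hi, rfl⟩
    · rw [h'] at hj; omega
    · exact h'
    · rw [(h1 i hi).2] at hj
      rw [(h1 i hi).1] at hj
      omega
  have hset : invSet σ = X.image fun i => (i, σ i) := by
    ext ⟨p1, p2⟩
    simp only [mem_invSet, Finset.mem_image, Prod.mk.injEq]
    constructor
    · rintro ⟨h12, hinv⟩
      rw [Fin.lt_def] at h12 hinv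
      have e1 := fact_pm p1
      have e2 := fact_pm p2
      have hval1 : (σ p1 : ℕ) = (p1 : ℕ) + 1 := by omega
      have hval2 : (p2 : ℕ) = (p1 : ℕ) + 1 := by omega
      refine ⟨p1, factX p1 hval1, rfl, ?_⟩
      exact Fin.ext (by omega)
    · rintro ⟨i, hi, rfl, rfl⟩
      have hv := (h1 i hi).1
      have hvv := (h1 i hi).2
      constructor
      · rw [Fin.lt_def]; omega
      · rw [hvv, Fin.lt_def]; omega
  rw [invNum_eq, hset]
  exact Finset.card_image_of_injective _ fun a b hab => congrArg Prod.fst hab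

end SigmaXAux

namespace SigmaXAux

variable {n : ℕ}

lemma pointwise_of_involution {w : Equiv.Perm (Fin n)} (hw : w * w = 1) :
    ∀ x, w (w x) = x := fun x => by
  have := DFunLike.congr_fun hw x
  simpa [Equiv.Perm.mul_apply] using this

lemma caseB (w : Equiv.Perm (Fin n)) (hw : w * w = 1)
    (h : ∀ a b : Fin n, (a : ℕ) + 1 = (b : ℕ) → w b < w a → (w a : ℕ) = (a : ℕ) + 1) :
    ∃ (X : Finset (Fin n)) (σ τ : Equiv.Perm (Fin n)),
      NoConsec X ∧ IsSigmaX X σ ∧ w = τ⁻¹ * σ * τ ∧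
      invNum w = 2 * invNum τ + X.card := by
  classical
  have hpt := pointwise_of_involution hw
  have hub : ∀ a : Fin n, (w a : ℕ) ≤ (a : ℕ) + 1 := by
    by_contra hcon
    push_neg at hcon
    obtain ⟨a0, ha0⟩ := hcon
    set S : Finset (Fin n) := Finset.univ.filter (fun a => (a : ℕ) + 1 < (w a : ℕ))
      with hS
    have hSne : S.Nonempty := by
      refine ⟨a0, ?_⟩
      simp only [hS, Finset.mem_filter, Finset.mem_univ, true_and]
      exact ha0
    set a := S.max' hSne with ha
    have haS : a ∈ S := S.max'_mem hSne
    have hamem : (a : ℕ) + 1 < (w a : ℕ) := by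
      simpa [hS] using haS
    have hbn : (a : ℕ) + 1 < n := by
      have := (w a).isLt; omega
    set b : Fin n := ⟨(a : ℕ) + 1, hbn⟩ with hb
    have hab : (a : ℕ) + 1 = (b : ℕ) := rfl
    have hne' : w a ≠ w b := by
      intro hh
      have := w.injective hh
      have : (a : ℕ) = (b : ℕ) := congrArg Fin.val this
      omega
    rcases lt_or_gt_of_ne hne' with hlt | hgt
    · have hbS : b ∈ S := by
        simp only [hS, Finset.mem_filter, Finset.mem_univ, true_and]
        have := Fin.lt_def.mp hlt
        omega
      have := S.le_max' b hbS
      rw [← ha, Fin.le_def] at this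
      omega
    · have := h a b hab hgt
      omega
  have hlb : ∀ a : Fin n, (a : ℕ) ≤ (w a : ℕ) + 1 := fun a => by
    have := hub (w a)
    rw [hpt] at this
    exact this
  set X : Finset (Fin n) := Finset.univ.filter (fun i => (w i : ℕ) = (i : ℕ) + 1)
    with hX
  have hmemX : ∀ i : Fin n, i ∈ X ↔ (w i : ℕ) = (i : ℕ) + 1 := by
    intro i; simp [hX]
  have hsig : IsSigmaX X w := by
    constructor
    · intro i hi
      exact ⟨(hmemX i).mp hi, hpt i⟩
    · intro j hj
      by_contra hne
      have hnev : (w j : ℕ) ≠ (j : ℕ) := fun hh => hne (Fin.ext hh)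
      have h1 := hub j
      have h2 := hlb j
      rcases (by omega : (w j : ℕ) = (j : ℕ) + 1 ∨ (j : ℕ) = (w j : ℕ) + 1) with hc | hc
      · exact (hj j ((hmemX j).mpr hc)).1 rfl
      · have hiX : w j ∈ X := by
          rw [hmemX, hpt j]
          omega
        exact (hj (w j) hiX).2 hc
  have hnc : NoConsec X := by
    intro i hi j hj hji
    have hwi := (hmemX i).mp hi
    have hwj := (hmemX j).mp hj
    have : w i = j := Fin.ext (by omega)
    have : w j = i := by rw [← this, hpt]
    rw [this] at hwj
    omega
  refine ⟨X, w, 1, hnc, hsig, by simp, ?_⟩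
  rw [invNum_one, invNum_sigmaX hsig]
  omega

lemma caseA_len (w : Equiv.Perm (Fin n)) (hw : w * w = 1) {a b : Fin n}
    (hab : (a : ℕ) + 1 = (b : ℕ)) (hdesc : w b < w a) (hne : (w a : ℕ) ≠ (a : ℕ) + 1) :
    invNum w = invNum (Equiv.swap a b * w * Equiv.swap a b) + 2 := by
  set s := Equiv.swap a b with hs
  have hinvw : w⁻¹ = w := inv_eq_of_mul_eq_one_right hw
  have h1 : invNum w = invNum (w * s) + 1 := invNum_mul_swap_descent w hab hdesc
  have hsA : s (w b) < s (w a) := by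
    refine swap_lt_swap hab hdesc ?_
    rintro ⟨-, h2'⟩
    exact hne (by rw [h2', ← hab])
  have e1 : (w * s)⁻¹ = s * w := by
    rw [mul_inv_rev, hinvw, hs, Equiv.swap_inv a b]
  have h2' : invNum (s * w) = invNum (s * w * s) + 1 :=
    invNum_mul_swap_descent (s * w) hab (by simpa [Equiv.Perm.mul_apply] using hsA)
  have h2 : invNum (w * s) = invNum (s * w * s) + 1 := by
    rw [← invNum_inv (w * s), e1, h2']
  omega

lemma main_aux : ∀ N : ℕ, ∀ w : Equiv.Perm (Fin n), w * w = 1 → invNum w ≤ N →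
    ∃ (X : Finset (Fin n)) (σ τ : Equiv.Perm (Fin n)),
      NoConsec X ∧ IsSigmaX X σ ∧ w = τ⁻¹ * σ * τ ∧
      invNum w = 2 * invNum τ + X.card := by
  intro N
  induction N with
  | zero =>
    intro w hw hle
    by_cases hA : ∃ a : Fin n, ∃ hbn : (a : ℕ) + 1 < n,
        w ⟨(a : ℕ) + 1, hbn⟩ < w a ∧ (w a : ℕ) ≠ (a : ℕ) + 1
    · exfalso
      obtain ⟨a, hbn, hdesc, hne⟩ := hA
      have := caseA_len w hw (a := a) (b := ⟨(a : ℕ) + 1, hbn⟩) rfl hdesc hne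
      omega
    · refine caseB w hw ?_
      intro a b hab hd
      by_contra hne
      apply hA
      have hbn : (a : ℕ) + 1 < n := by rw [hab]; exact b.isLt
      refine ⟨a, hbn, ?_, hne⟩
      have hbeq : (⟨(a : ℕ) + 1, hbn⟩ : Fin n) = b := Fin.ext hab
      rw [hbeq]
      exact hd
  | succ N ih =>
    intro w hw hle
    by_cases hA : ∃ a : Fin n, ∃ hbn : (a : ℕ) + 1 < n,
        w ⟨(a : ℕ) + 1, hbn⟩ < w a ∧ (w a : ℕ) ≠ (a : ℕ) + 1
    · obtain ⟨a, hbn, hdesc, hne⟩ := hA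
      set b : Fin n := ⟨(a : ℕ) + 1, hbn⟩ with hb
      have hab : (a : ℕ) + 1 = (b : ℕ) := rfl
      set s := Equiv.swap a b with hs
      have hpt := pointwise_of_involution hw
      have hspt : ∀ x, s (s x) = x := fun x => Equiv.swap_apply_self a b x
      have hlen : invNum w = invNum (s * w * s) + 2 := caseA_len w hw hab hdesc hne
      set w' := s * w * s with hw'
      have hw'inv : w' * w' = 1 := by
        apply Equiv.ext
        intro x
        simp [hw', Equiv.Perm.mul_apply, hpt, hspt]
      have hle' : invNum w' ≤ N := by omega
      obtain ⟨X, σ, τ, hnc, hsig, hconj, hlen'⟩ := ih w' hw'inv hle'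
      have hback : w = s * w' * s := by
        apply Equiv.ext
        intro x
        simp [hw', Equiv.Perm.mul_apply, hspt]
      have hwconj : w = (τ * s)⁻¹ * σ * (τ * s) := by
        rw [hback, hconj, mul_inv_rev, hs, Equiv.swap_inv a b]
        group
      refine ⟨X, σ, τ * s, hnc, hsig, hwconj, ?_⟩
      have hsiglen := invNum_sigmaX hsig
      by_cases hts : τ a < τ b
      · have hup : invNum (τ * s) = invNum τ + 1 := invNum_mul_swap_ascent τ hab hts
        omega
      · have htne : τ a ≠ τ b := by
          intro hh
          have := congrArg Fin.val (τ.injective hh)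
          omega
        have hts' : τ b < τ a := lt_of_le_of_ne (not_lt.mp hts) (Ne.symm htne)
        have hdec : invNum τ = invNum (τ * s) + 1 := invNum_mul_swap_descent τ hab hts'
        have hbound : invNum w ≤ 2 * invNum (τ * s) + X.card := by
          rw [hwconj]
          calc invNum ((τ * s)⁻¹ * σ * (τ * s))
              ≤ invNum ((τ * s)⁻¹ * σ) + invNum (τ * s) := invNum_mul_le _ _
            _ ≤ invNum (τ * s)⁻¹ + invNum σ + invNum (τ * s) := by
                have := invNum_mul_le (τ * s)⁻¹ σ
                omega
            _ = 2 * invNum (τ * s) + X.card := by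
                rw [invNum_inv, hsiglen]
                ring
        omega
    · refine caseB w hw ?_
      intro a b hab hd
      by_contra hne
      apply hA
      have hbn : (a : ℕ) + 1 < n := by rw [hab]; exact b.isLt
      refine ⟨a, hbn, ?_, hne⟩
      have hbeq : (⟨(a : ℕ) + 1, hbn⟩ : Fin n) = b := Fin.ext hab
      rw [hbeq]
      exact hd

end SigmaXAux


/-- Every involution `w` of `S_n` can be written as `w = τ⁻¹ σ_X τ` with `X` a set of
indices containing no two consecutive integers, `σ_X` the product of the adjacent
transpositions `(i, i+1)` for `i ∈ X`, and the lengths adding up: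
`inv(w) = 2·inv(τ) + |X|`. -/
theorem involution_conjugate_sigmaX {n : ℕ} (w : Equiv.Perm (Fin n)) (hw : w * w = 1) :
    ∃ (X : Finset (Fin n)) (σ τ : Equiv.Perm (Fin n)),
      NoConsec X ∧ IsSigmaX X σ ∧ w = τ⁻¹ * σ * τ ∧
      invNum w = 2 * invNum τ + X.card :=
  SigmaXAux.main_aux (invNum w) w hw le_rfl
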